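/- Let m ≥ n and suppose there exists a nonsingular M ∈ R^{m×m} with σ_n(M A) > ‖M B‖₂. If the equation A x − B|x| = b has a solution, then the solution is unique. -/

import Mathlib

open Matrix

/-- The `i`-th largest singular value of a real matrix (0-indexed),
defined as the `i`-th entry of the decreasingly sorted list of square roots
of the eigenvalues of `Aᴴ * A`; `0` if `i` is out of range. -/
noncomputable def sv {m n : ℕ} (A : Matrix (Fin m) (Fin n) ℝ) (i : ℕ) : ℝ :=
  ((List.ofFn fun j : Fin n =>
      Real.sqrt ((Matrix.isHermitian_conjTranspose_mul_self A).eigenvalues j)).insertionSort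
    (· ≥ ·)).getD i 0

/-- Euclidean norm of a vector. -/
noncomputable def vnorm {n : ℕ} (x : Fin n → ℝ) : ℝ := Real.sqrt (∑ i, x i ^ 2)

set_option linter.unusedVariables false

/- quadratic form in eigen-coordinates -/
lemma quad_eq {n : ℕ} (H : Matrix (Fin n) (Fin n) ℝ) (hH : H.IsHermitian) (v : Fin n → ℝ) :
    v ⬝ᵥ (H *ᵥ v) = ∑ j, hH.eigenvalues j * ((hH.eigenvectorBasis j : Fin n → ℝ) ⬝ᵥ v) ^ 2 := by
  classical
  set e := hH.eigenvectorBasis with he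
  have hrepr : ∀ (w : EuclideanSpace ℝ (Fin n)) (j : Fin n),
      e.repr w j = (e j : Fin n → ℝ) ⬝ᵥ w := by
    intro w j
    rw [e.repr_apply_apply]
    simp [PiLp.inner_apply, RCLike.inner_apply, dotProduct, mul_comm]
  have hHt : Hᵀ = H := by
    have := hH.eq
    exact (Matrix.conjTranspose_eq_transpose_of_trivial H).symm.trans this
  have hdot : ∀ j, (e j : Fin n → ℝ) ⬝ᵥ (H *ᵥ v)
      = hH.eigenvalues j * ((e j : Fin n → ℝ) ⬝ᵥ v) := by
    intro j
    rw [dotProduct_mulVec, ← mulVec_transpose, hHt,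
      show (H *ᵥ (e j : Fin n → ℝ)) = hH.eigenvalues j • (e j : Fin n → ℝ) from
        hH.mulVec_eigenvectorBasis j]
    simp [dotProduct, PiLp.smul_apply, Finset.mul_sum, mul_assoc]
  have h1 : v ⬝ᵥ (H *ᵥ v)
      = @inner ℝ (EuclideanSpace ℝ (Fin n)) _ (WithLp.toLp 2 v) (WithLp.toLp 2 (H *ᵥ v)) := by
    simp [PiLp.inner_apply, RCLike.inner_apply, dotProduct, mul_comm]
  rw [h1, ← LinearIsometryEquiv.inner_map_map e.repr]
  simp only [PiLp.inner_apply, RCLike.inner_apply, starRingEnd_apply, star_trivial]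
  simp_rw [hrepr (WithLp.toLp 2 v), hrepr (WithLp.toLp 2 (H *ᵥ v)), hdot]
  ring_nf

lemma norm_eq_coords {n : ℕ} {H : Matrix (Fin n) (Fin n) ℝ} (hH : H.IsHermitian)
    (v : Fin n → ℝ) :
    ∑ i, v i ^ 2 = ∑ j, ((hH.eigenvectorBasis j : Fin n → ℝ) ⬝ᵥ v) ^ 2 := by
  classical
  set e := hH.eigenvectorBasis with he
  have hrepr : ∀ (w : EuclideanSpace ℝ (Fin n)) (j : Fin n),
      e.repr w j = (e j : Fin n → ℝ) ⬝ᵥ w := by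
    intro w j
    rw [e.repr_apply_apply]
    simp [PiLp.inner_apply, RCLike.inner_apply, dotProduct, mul_comm]
  have h1 : (∑ i, v i ^ 2) = @inner ℝ (EuclideanSpace ℝ (Fin n)) _ (WithLp.toLp 2 v) (WithLp.toLp 2 v) := by
    simp [PiLp.inner_apply, RCLike.inner_apply, sq, -inner_self_eq_norm_sq_to_K]
  rw [h1, ← LinearIsometryEquiv.inner_map_map e.repr]
  simp only [PiLp.inner_apply, RCLike.inner_apply, starRingEnd_apply, star_trivial]
  simp_rw [hrepr (WithLp.toLp 2 v), sq]

/- sorted list facts -/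
lemma sorted_bounds {l : List ℝ} {x : ℝ} (hx : x ∈ l) :
    (l.insertionSort (· ≥ ·)).getD (l.length - 1) 0 ≤ x ∧
      x ≤ (l.insertionSort (· ≥ ·)).getD 0 0 := by
  classical
  set l' := l.insertionSort (· ≥ ·) with hl'
  have hperm : List.Perm l' l := List.perm_insertionSort _ l
  have hlen : l'.length = l.length := hperm.length_eq
  have hsorted : l'.Pairwise (· ≥ ·) := List.pairwise_insertionSort _ l
  have hx' : x ∈ l' := hperm.mem_iff.2 hx
  obtain ⟨k, hk⟩ := List.get_of_mem hx'
  have hpos : 0 < l'.length := List.length_pos_iff.2 (List.ne_nil_of_mem hx')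
  have hpair := (List.pairwise_iff_get.1 hsorted)
  constructor
  · have hlast : l'.length - 1 < l'.length := Nat.sub_lt hpos one_pos
    rw [← hlen, List.getD_eq_get l' 0 ⟨_, hlast⟩]
    rcases eq_or_lt_of_le (Nat.le_sub_one_of_lt k.isLt) with hek | hlt
    · rw [← hk]
      exact le_of_eq (congrArg _ (Fin.ext hek.symm))
    · rw [← hk]
      exact hpair k ⟨l'.length - 1, hlast⟩ hlt
  · rw [List.getD_eq_get l' 0 ⟨_, hpos⟩]
    rcases Nat.eq_zero_or_pos k.val with hek | hlt
    · rw [← hk]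
      exact le_of_eq (congrArg _ (Fin.ext hek))
    · rw [← hk]
      exact hpair ⟨0, hpos⟩ k hlt

lemma sv_nonneg {m n : ℕ} (A : Matrix (Fin m) (Fin n) ℝ) (i : ℕ) : 0 ≤ sv A i := by
  classical
  unfold sv
  set l := (List.ofFn fun j : Fin n =>
      Real.sqrt ((Matrix.isHermitian_conjTranspose_mul_self A).eigenvalues j))
  set l' := l.insertionSort (· ≥ ·) with hl'
  by_cases hi : i < l'.length
  · rw [List.getD_eq_get l' 0 ⟨_, hi⟩]
    have hmem : l'.get ⟨i, hi⟩ ∈ l := (List.perm_insertionSort _ l).mem_iff.1 (l'.get_mem _)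
    rw [List.mem_ofFn] at hmem
    obtain ⟨j, hj⟩ := hmem
    rw [← hj]
    exact Real.sqrt_nonneg _
  · rw [List.getD_eq_default l' 0 (le_of_not_gt hi)]

lemma sv_le_sqrt_eig {m n : ℕ} (hn : 0 < n) (A : Matrix (Fin m) (Fin n) ℝ) (j : Fin n) :
    sv A (n-1) ≤ Real.sqrt ((Matrix.isHermitian_conjTranspose_mul_self A).eigenvalues j) ∧
      Real.sqrt ((Matrix.isHermitian_conjTranspose_mul_self A).eigenvalues j) ≤ sv A 0 := by
  classical
  have hmem : Real.sqrt ((Matrix.isHermitian_conjTranspose_mul_self A).eigenvalues j) ∈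
      (List.ofFn fun j : Fin n =>
        Real.sqrt ((Matrix.isHermitian_conjTranspose_mul_self A).eigenvalues j)) := by
    rw [List.mem_ofFn]
    exact ⟨j, rfl⟩
  have := sorted_bounds hmem
  rwa [List.length_ofFn] at this

lemma vnorm_nonneg {n : ℕ} (x : Fin n → ℝ) : 0 ≤ vnorm x := Real.sqrt_nonneg _

lemma sum_Av_sq {m n : ℕ} (A : Matrix (Fin m) (Fin n) ℝ) (v : Fin n → ℝ) :
    ∑ i, (A *ᵥ v) i ^ 2 = v ⬝ᵥ ((Aᴴ * A) *ᵥ v) := by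
  rw [← mulVec_mulVec, dotProduct_mulVec,
    show Aᴴ = Aᵀ from Matrix.conjTranspose_eq_transpose_of_trivial A, vecMul_transpose]
  simp [dotProduct, sq]

lemma sv_lower {m n : ℕ} (hn : 0 < n) (A : Matrix (Fin m) (Fin n) ℝ) (v : Fin n → ℝ) :
    sv A (n-1) * vnorm v ≤ vnorm (A *ᵥ v) := by
  classical
  set hH := Matrix.isHermitian_conjTranspose_mul_self A with hhH
  have hsq : (sv A (n-1))^2 * (∑ i, v i^2) ≤ ∑ i, (A *ᵥ v) i ^2 := by
    rw [sum_Av_sq A v, quad_eq _ hH v, norm_eq_coords hH v, Finset.mul_sum]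
    refine Finset.sum_le_sum fun j _ => ?_
    refine mul_le_mul_of_nonneg_right ?_ (sq_nonneg _)
    have h1 := (sv_le_sqrt_eig hn A j).1
    have h2 := sv_nonneg A (n-1)
    calc sv A (n-1) ^ 2 ≤ Real.sqrt (hH.eigenvalues j) ^ 2 := by
          exact pow_le_pow_left₀ h2 h1 2
      _ = hH.eigenvalues j := Real.sq_sqrt (Matrix.eigenvalues_conjTranspose_mul_self_nonneg A j)
  have := Real.sqrt_le_sqrt hsq
  rwa [Real.sqrt_mul (sq_nonneg _), Real.sqrt_sq (sv_nonneg A (n-1))] at this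

lemma sv_upper {m n : ℕ} (hn : 0 < n) (A : Matrix (Fin m) (Fin n) ℝ) (v : Fin n → ℝ) :
    vnorm (A *ᵥ v) ≤ sv A 0 * vnorm v := by
  classical
  set hH := Matrix.isHermitian_conjTranspose_mul_self A with hhH
  have hsq : ∑ i, (A *ᵥ v) i ^2 ≤ (sv A 0)^2 * (∑ i, v i^2) := by
    rw [sum_Av_sq A v, quad_eq _ hH v, norm_eq_coords hH v, Finset.mul_sum]
    refine Finset.sum_le_sum fun j _ => ?_
    refine mul_le_mul_of_nonneg_right ?_ (sq_nonneg _)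
    have h1 := (sv_le_sqrt_eig hn A j).2
    calc hH.eigenvalues j
        = Real.sqrt (hH.eigenvalues j) ^ 2 :=
          (Real.sq_sqrt (Matrix.eigenvalues_conjTranspose_mul_self_nonneg A j)).symm
      _ ≤ (sv A 0)^2 := pow_le_pow_left₀ (Real.sqrt_nonneg _) h1 2
  have := Real.sqrt_le_sqrt hsq
  rwa [Real.sqrt_mul (sq_nonneg _), Real.sqrt_sq (sv_nonneg A 0)] at this

/-- If `m ≥ n` and there is a nonsingular `M ∈ ℝ^{m×m}` with `σ_n(M A) > ‖M B‖₂`, then a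
solution of `A x − B|x| = b`, if one exists, is unique. -/
theorem gave_unique_of_sv {m n : ℕ} (hmn : n ≤ m) (A B : Matrix (Fin m) (Fin n) ℝ)
    (M : Matrix (Fin m) (Fin m) ℝ) (hM : IsUnit M)
    (h : sv (M * A) (n - 1) > sv (M * B) 0) (b : Fin m → ℝ)
    (hex : ∃ x : Fin n → ℝ, A.mulVec x - B.mulVec (fun j => |x j|) = b) :
    ∃! x : Fin n → ℝ, A.mulVec x - B.mulVec (fun j => |x j|) = b := by
  classical
  obtain ⟨x, hx⟩ := hex
  refine ⟨x, hx, fun y hy => ?_⟩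
  rcases Nat.eq_zero_or_pos n with hn | hn
  · subst hn; funext i; exact i.elim0
  by_contra hne
  set d : Fin n → ℝ := y - x with hd
  set u : Fin n → ℝ := fun j => |y j| - |x j| with hu
  have hAd : A *ᵥ d = B *ᵥ u := by
    have := sub_eq_zero.2 (hy.trans hx.symm)
    rw [sub_sub_sub_comm] at this
    have h2 : A *ᵥ y - A *ᵥ x = B *ᵥ (fun j => |y j|) - B *ᵥ (fun j => |x j|) := by
      linear_combination (norm := abel) this
    rw [← Matrix.mulVec_sub, ← Matrix.mulVec_sub] at h2
    exact h2
  have hMAd : (M * A) *ᵥ d = (M * B) *ᵥ u := by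
    rw [← Matrix.mulVec_mulVec, ← Matrix.mulVec_mulVec, hAd]
  have hvd_pos : 0 < vnorm d := by
    have hdne : d ≠ 0 := sub_ne_zero.2 hne
    obtain ⟨j, hj⟩ : ∃ j, d j ≠ 0 := by
      by_contra hc
      push_neg at hc
      exact hdne (funext hc)
    apply Real.sqrt_pos.2
    apply Finset.sum_pos' (fun i _ => sq_nonneg _)
    exact ⟨j, Finset.mem_univ j, by positivity⟩
  have hvu_le : vnorm u ≤ vnorm d := by
    apply Real.sqrt_le_sqrt
    refine Finset.sum_le_sum fun j _ => ?_
    have h1 : |u j| ≤ |d j| := by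
      simpa [hu, hd] using abs_abs_sub_abs_le_abs_sub (y j) (x j)
    calc u j ^ 2 = |u j| ^ 2 := (sq_abs _).symm
      _ ≤ |d j| ^ 2 := pow_le_pow_left₀ (abs_nonneg _) h1 2
      _ = d j ^ 2 := sq_abs _
  have hchain : sv (M * A) (n-1) * vnorm d ≤ sv (M * B) 0 * vnorm d := by
    calc sv (M * A) (n-1) * vnorm d ≤ vnorm ((M * A) *ᵥ d) := sv_lower hn _ d
      _ = vnorm ((M * B) *ᵥ u) := by rw [hMAd]
      _ ≤ sv (M * B) 0 * vnorm u := sv_upper hn _ u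
      _ ≤ sv (M * B) 0 * vnorm d := mul_le_mul_of_nonneg_left hvu_le (sv_nonneg _ _)
  have := le_of_mul_le_mul_right hchain hvd_pos
  exact absurd h (not_lt.2 this)
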